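/- arXiv:2404.15885 — 2 statements merged into one kernel-verified Lean document; each statement's English description precedes it below -/
import Mathlib

section
/- Let 0 < T < T_f, let v : [T,T_f] → ℝ be continuous, and let a, b : [T,T_f] → [0,∞) be continuous. If v(t) ≤ b(t) + ∫_t^{T_f} a(s) v(s) ds for all t ∈ [T,T_f], then v(t) ≤ b(t) + ∫_t^{T_f} a(s) b(s) exp(∫_t^s a(s′) ds′) ds for all t ∈ [T,T_f]. -/
open intervalIntegral

/-- **Backwards Grönwall inequality.**  If `v(t) ≤ b(t) + ∫_t^{T_f} a(s) v(s) ds`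
on `[T, T_f]`, with `a, b` continuous and nonnegative and `v` continuous, then
`v(t) ≤ b(t) + ∫_t^{T_f} a(s) b(s) exp(∫_t^s a) ds` on `[T, T_f]`. -/
theorem gronwall_backwards (T Tf : ℝ) (hT : 0 < T) (hTTf : T < Tf)
    (v a b : ℝ → ℝ)
    (hv : ContinuousOn v (Set.Icc T Tf))
    (ha : ContinuousOn a (Set.Icc T Tf))
    (hb : ContinuousOn b (Set.Icc T Tf))
    (ha0 : ∀ t ∈ Set.Icc T Tf, 0 ≤ a t)
    (hb0 : ∀ t ∈ Set.Icc T Tf, 0 ≤ b t)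
    (hineq : ∀ t ∈ Set.Icc T Tf, v t ≤ b t + ∫ s in t..Tf, a s * v s) :
    ∀ t ∈ Set.Icc T Tf,
      v t ≤ b t + ∫ s in t..Tf, a s * b s * Real.exp (∫ u in t..s, a u) := by
  have hTT : T ≤ Tf := hTTf.le
  have hTmem : T ∈ Set.Icc T Tf := Set.left_mem_Icc.2 hTT
  have hTfmem : Tf ∈ Set.Icc T Tf := Set.right_mem_Icc.2 hTT
  have hsub : ∀ {x y : ℝ}, x ∈ Set.Icc T Tf → y ∈ Set.Icc T Tf →
      Set.uIcc x y ⊆ Set.Icc T Tf := fun hx hy => Set.uIcc_subset_Icc hx hy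
  -- continuity of integrands
  have hav : ContinuousOn (fun s => a s * v s) (Set.Icc T Tf) := ha.mul hv
  -- interval integrability on subintervals
  have havI : ∀ {x y : ℝ}, x ∈ Set.Icc T Tf → y ∈ Set.Icc T Tf →
      IntervalIntegrable (fun s => a s * v s) MeasureTheory.volume x y :=
    fun hx hy => (hav.mono (hsub hx hy)).intervalIntegrable
  have haI : ∀ {x y : ℝ}, x ∈ Set.Icc T Tf → y ∈ Set.Icc T Tf →
      IntervalIntegrable a MeasureTheory.volume x y :=
    fun hx hy => (ha.mono (hsub hx hy)).intervalIntegrable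
  set B : ℝ → ℝ := fun x => ∫ u in T..x, a u with hBdef
  have hBcont : ContinuousOn B (Set.Icc T Tf) := by
    have := continuousOn_primitive_interval (μ := MeasureTheory.volume) (f := a) (a := T) (b := Tf)
      ((ha.mono (hsub hTmem hTfmem)).integrableOn_compact isCompact_uIcc)
    rwa [Set.uIcc_of_le hTT] at this
  set g : ℝ → ℝ := fun x => a x * b x * Real.exp (B x) with hgdef
  have hgcont : ContinuousOn g (Set.Icc T Tf) :=
    (ha.mul hb).mul (Real.continuous_exp.comp_continuousOn hBcont)
  have hgI : ∀ {x y : ℝ}, x ∈ Set.Icc T Tf → y ∈ Set.Icc T Tf →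
      IntervalIntegrable g MeasureTheory.volume x y :=
    fun hx hy => (hgcont.mono (hsub hx hy)).intervalIntegrable
  set w : ℝ → ℝ := fun x => (∫ s in T..Tf, a s * v s) - ∫ s in T..x, a s * v s with hwdef
  have hweq : ∀ x ∈ Set.Icc T Tf, w x = ∫ s in x..Tf, a s * v s := by
    intro x hx
    exact integral_interval_sub_left (havI hTmem hTfmem) (havI hTmem hx)
  have hwcont : ContinuousOn w (Set.Icc T Tf) := by
    apply continuousOn_const.sub
    have := continuousOn_primitive_interval (μ := MeasureTheory.volume)
      (f := fun s => a s * v s) (a := T) (b := Tf)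
      ((hav.mono (hsub hTmem hTfmem)).integrableOn_compact isCompact_uIcc)
    rwa [Set.uIcc_of_le hTT] at this
  set h : ℝ → ℝ := fun x => Real.exp (B x) * w x + ∫ s in T..x, g s with hhdef
  have hhcont : ContinuousOn h (Set.Icc T Tf) := by
    apply ((Real.continuous_exp.comp_continuousOn hBcont).mul hwcont).add
    have := continuousOn_primitive_interval (μ := MeasureTheory.volume) (f := g) (a := T) (b := Tf)
      ((hgcont.mono (hsub hTmem hTfmem)).integrableOn_compact isCompact_uIcc)
    rwa [Set.uIcc_of_le hTT] at this
  -- derivative facts at interior points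
  have hderiv : ∀ x ∈ Set.Ioo T Tf,
      HasDerivAt h (Real.exp (B x) * (a x * (w x + b x - v x))) x := by
    intro x hx
    have hxI : x ∈ Set.Icc T Tf := Set.Ioo_subset_Icc_self hx
    have hopen : IsOpen (Set.Ioo T Tf) := isOpen_Ioo
    have hcontAt : ∀ (f : ℝ → ℝ), ContinuousOn f (Set.Icc T Tf) → ContinuousAt f x :=
      fun f hf => hf.continuousAt (Icc_mem_nhds hx.1 hx.2)
    have hmeas : ∀ (f : ℝ → ℝ), ContinuousOn f (Set.Icc T Tf) →
        StronglyMeasurableAtFilter f (nhds x) MeasureTheory.volume :=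
      fun f hf => ContinuousOn.stronglyMeasurableAtFilter hopen
        (hf.mono Set.Ioo_subset_Icc_self) x hx
    have hB' : HasDerivAt B (a x) x :=
      integral_hasDerivAt_right (haI hTmem hxI) (hmeas a ha) (hcontAt a ha)
    have hw' : HasDerivAt w (-(a x * v x)) x := by
      have : HasDerivAt (fun y => ∫ s in T..y, a s * v s) (a x * v x) x :=
        integral_hasDerivAt_right (havI hTmem hxI) (hmeas _ hav) (hcontAt _ hav)
      have h2 := (hasDerivAt_const x (∫ s in T..Tf, a s * v s)).sub this
      rw [zero_sub] at h2
      exact h2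
    have hg' : HasDerivAt (fun y => ∫ s in T..y, g s) (g x) x :=
      integral_hasDerivAt_right (hgI hTmem hxI) (hmeas g hgcont) (hcontAt g hgcont)
    have hexp : HasDerivAt (fun y => Real.exp (B y)) (Real.exp (B x) * a x) x := by
      exact (Real.hasDerivAt_exp (B x)).comp x hB'
    have := ((hexp.mul hw').add hg')
    refine HasDerivAt.congr_deriv this ?_
    simp only [g]
    ring
  have hmono : MonotoneOn h (Set.Icc T Tf) := by
    apply monotoneOn_of_deriv_nonneg (convex_Icc T Tf) hhcont
    · intro x hx
      rw [interior_Icc] at hx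
      exact ((hderiv x hx).differentiableAt).differentiableWithinAt
    · intro x hx
      rw [interior_Icc] at hx
      rw [(hderiv x hx).deriv]
      have hxI : x ∈ Set.Icc T Tf := Set.Ioo_subset_Icc_self hx
      have h1 : v x ≤ b x + w x := by rw [hweq x hxI]; exact hineq x hxI
      have : (0:ℝ) ≤ w x + b x - v x := by linarith
      exact mul_nonneg (Real.exp_pos _).le (mul_nonneg (ha0 x hxI) this)
  intro t ht
  have hle : h t ≤ h Tf := hmono ht hTfmem ht.2
  have hwTf : w Tf = 0 := by simp [hwdef]
  have hsplit : (∫ s in T..Tf, g s) - ∫ s in T..t, g s = ∫ s in t..Tf, g s :=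
    integral_interval_sub_left (hgI hTmem hTfmem) (hgI hTmem ht)
  have key : Real.exp (B t) * w t ≤ ∫ s in t..Tf, g s := by
    have h0 := hle
    simp only [hhdef, hwTf, mul_zero, zero_add] at h0
    linarith
  have hwle : w t ≤ (∫ s in t..Tf, g s) / Real.exp (B t) := by
    rw [le_div_iff₀ (Real.exp_pos _)]
    linarith [key]
  have hconv : (∫ s in t..Tf, g s) / Real.exp (B t)
      = ∫ s in t..Tf, a s * b s * Real.exp (∫ u in t..s, a u) := by
    rw [← intervalIntegral.integral_div]
    apply intervalIntegral.integral_congr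
    intro s hs
    have hsI : s ∈ Set.Icc T Tf := hsub ht hTfmem hs
    have hBs : B s - B t = ∫ u in t..s, a u :=
      integral_interval_sub_left (haI hTmem hsI) (haI hTmem ht)
    simp only [hgdef]
    rw [mul_div_assoc, ← Real.exp_sub, hBs]
  calc v t ≤ b t + w t := by rw [hweq t ht]; exact hineq t ht
    _ ≤ b t + ∫ s in t..Tf, a s * b s * Real.exp (∫ u in t..s, a u) := by
        rw [← hconv]; linarith [hwle]
end

section
/- There exists a constant C > 0 such that for every h ∈ H²(ℝ³) with x ↦ |x|·Δh(x) belonging to L²(ℝ³), one has ‖∇h‖_{L²(ℝ³)} ≤ C ‖ |x| Δh ‖_{L²(ℝ³)}. -/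
noncomputable section

open MeasureTheory Real

abbrev E3 := EuclideanSpace ℝ (Fin 3)

/-- The `i`-th coordinate direction in `ℝ³`. -/
noncomputable def e3 (i : Fin 3) : E3 := EuclideanSpace.single i 1

/-- Partial derivative of `h : ℝ³ → ℝ` in the `i`-th coordinate direction. -/
noncomputable def dd (i : Fin 3) (h : E3 → ℝ) (x : E3) : ℝ := fderiv ℝ h x (e3 i)

/-- The Laplacian `Δh = Σᵢ ∂ᵢ∂ᵢ h`. -/
noncomputable def lap (h : E3 → ℝ) (x : E3) : ℝ := ∑ i, dd i (dd i h) x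

/-! ### Auxiliary lemmas -/

lemma norm_toLp_eq (f : E3 → ℝ) (hf : MemLp f 2 volume) :
    ‖hf.toLp f‖ = Real.sqrt (∫ x, f x ^ 2) := by
  rw [Lp.norm_toLp, hf.eLpNorm_eq_integral_rpow_norm two_ne_zero ENNReal.ofNat_ne_top]
  rw [ENNReal.toReal_ofReal (by positivity)]
  rw [Real.sqrt_eq_rpow]
  norm_num

/-- Cauchy–Schwarz for integrals. -/
lemma cs {f g : E3 → ℝ} (hf : MemLp f 2 volume) (hg : MemLp g 2 volume) :
    ∫ x, f x * g x ≤ Real.sqrt (∫ x, f x ^ 2) * Real.sqrt (∫ x, g x ^ 2) := by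
  have h1 : ∫ x, f x * g x = inner (𝕜 := ℝ) (hf.toLp f) (hg.toLp g) := by
    rw [L2.inner_def]
    apply integral_congr_ae
    filter_upwards [hf.coeFn_toLp, hg.coeFn_toLp] with x hx hy
    simp [hx, hy, mul_comm]
  rw [h1, ← norm_toLp_eq f hf, ← norm_toLp_eq g hg]
  exact real_inner_le_norm _ _

lemma integrable_mul_L2 {f g : E3 → ℝ} (hf : MemLp f 2 volume) (hg : MemLp g 2 volume) :
    Integrable (fun x => f x * g x) volume := by
  rw [← memLp_one_iff_integrable]
  have := hg.smul (φ := f) (r := 1) hf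
  exact this

lemma contDiff_dd {h : E3 → ℝ} (hh : ContDiff ℝ 2 h) (i : Fin 3) : ContDiff ℝ 1 (dd i h) := by
  have h1 : ContDiff ℝ 1 (fderiv ℝ h) := hh.fderiv_right (by norm_num)
  exact h1.clm_apply contDiff_const

lemma grad_apply {h : E3 → ℝ} (x : E3) (i : Fin 3) : gradient h x i = dd i h x := by
  have : dd i h x = inner (𝕜 := ℝ) (gradient h x) (e3 i) := by
    rw [dd, gradient, InnerProductSpace.toDual_symm_apply]
  rw [this, e3]
  rw [EuclideanSpace.inner_single_right]; simp

lemma inner_eval (v : E3) (x : E3) : inner (𝕜 := ℝ) v x = ∑ i, v i * x i := by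
  simp [PiLp.inner_apply, mul_comm]

lemma norm_sq_eq (x : E3) : ‖x‖ ^ 2 = ∑ i, x i ^ 2 := by
  rw [EuclideanSpace.norm_eq, Real.sq_sqrt (by positivity)]
  simp [sq_abs]

lemma norm_grad_sq {h : E3 → ℝ} (x : E3) : ‖gradient h x‖ ^ 2 = ∑ i, dd i h x ^ 2 := by
  rw [norm_sq_eq]
  exact Finset.sum_congr rfl fun i _ => by rw [grad_apply]

lemma grad_eq_sum {h : E3 → ℝ} (x : E3) : gradient h x = ∑ i, dd i h x • e3 i := by
  refine PiLp.ext fun j => ?_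
  have : (∑ i, dd i h x • e3 i) j = ∑ i, dd i h x • (e3 i j) :=
    Finset.sum_apply j Finset.univ (fun i => dd i h x • e3 i)
  rw [this, grad_apply]
  simp [e3, EuclideanSpace.single_apply]

lemma coord_abs_le (x : E3) (i : Fin 3) : |x i| ≤ ‖x‖ := by
  have h1 : x i ^ 2 ≤ ‖x‖ ^ 2 := by
    rw [norm_sq_eq]
    exact Finset.single_le_sum (f := fun j => x j ^ 2) (fun j _ => sq_nonneg _)
      (Finset.mem_univ i)
  calc |x i| = Real.sqrt (x i ^ 2) := (Real.sqrt_sq_eq_abs _).symm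
    _ ≤ Real.sqrt (‖x‖ ^ 2) := Real.sqrt_le_sqrt h1
    _ = ‖x‖ := Real.sqrt_sq (norm_nonneg _)

/-- first integration by parts -/
lemma ibp1 {h : E3 → ℝ} (hh : ContDiff ℝ 2 h) (h2 : MemLp h 2 volume)
    (hd : ∀ i, MemLp (dd i h) 2 volume) (hdd : ∀ i j, MemLp (dd i (dd j h)) 2 volume)
    (i : Fin 3) :
    ∫ x, dd i h x ^ 2 = -∫ x, h x * dd i (dd i h) x := by
  have key := integral_mul_fderiv_eq_neg_fderiv_mul_of_integrable (μ := volume)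
    (f := dd i h) (g := h) (v := e3 i)
    (by simpa [dd] using integrable_mul_L2 (hdd i i) h2)
    (by simpa [dd] using integrable_mul_L2 (hd i) (hd i))
    (integrable_mul_L2 (hd i) h2)
    (fun x _ => (contDiff_dd hh i).differentiable (by norm_num) x)
    (fun x _ => hh.differentiable (by norm_num) x)
  have l : (∫ x, dd i h x ^ 2) = ∫ x, dd i h x * fderiv ℝ h x (e3 i) := by
    congr 1; ext x; rw [sq]; rfl
  rw [l, key]
  congr 1
  exact integral_congr_ae (.of_forall fun x => by simp only [dd]; rw [mul_comm])

/-! ### The regularized vector field -/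

def qe (ε : ℝ) (x : E3) : ℝ := ‖x‖ ^ 2 + ε
def Phi (ε : ℝ) (i : Fin 3) (x : E3) : ℝ := x i / qe ε x
def dPhi (ε : ℝ) (i : Fin 3) (x : E3) : ℝ := (qe ε x - 2 * x i ^ 2) / (qe ε x) ^ 2

variable {ε : ℝ}

lemma qe_pos (hε : 0 < ε) (x : E3) : 0 < qe ε x := by unfold qe; positivity

lemma norm_sq_le_qe (hε : 0 < ε) (x : E3) : ‖x‖ ^ 2 ≤ qe ε x := by
  unfold qe; linarith

lemma continuous_qe : Continuous (qe ε) := by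
  unfold qe; fun_prop

lemma hasFDerivAt_qe (x : E3) : HasFDerivAt (qe ε) (2 • (innerSL ℝ x)) x := by
  exact (hasStrictFDerivAt_norm_sq x).hasFDerivAt.add_const ε

lemma hasFDerivAt_Phi (hε : 0 < ε) (i : Fin 3) (x : E3) :
    HasFDerivAt (Phi ε i)
      (x i • ((-((qe ε x) ^ 2)⁻¹) • (2 • (innerSL ℝ x)))
        + (qe ε x)⁻¹ • (EuclideanSpace.proj i : E3 →L[ℝ] ℝ)) x := by
  have hinv : HasFDerivAt (fun y => (qe ε y)⁻¹)
      ((-((qe ε x) ^ 2)⁻¹) • (2 • (innerSL ℝ x))) x :=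
    (hasDerivAt_inv (qe_pos hε x).ne').comp_hasFDerivAt x (hasFDerivAt_qe x)
  have hmul := ((EuclideanSpace.proj i : E3 →L[ℝ] ℝ).hasFDerivAt (x := x)).mul hinv
  have : Phi ε i = fun y => (EuclideanSpace.proj i : E3 →L[ℝ] ℝ) y * (qe ε y)⁻¹ := by
    funext y; simp [Phi, div_eq_mul_inv]
  rw [this]
  convert hmul using 1 <;> rfl

lemma differentiable_Phi (hε : 0 < ε) (i : Fin 3) : Differentiable ℝ (Phi ε i) :=
  fun x => (hasFDerivAt_Phi hε i x).differentiableAt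

lemma fderiv_Phi (hε : 0 < ε) (i : Fin 3) (x : E3) :
    fderiv ℝ (Phi ε i) x (e3 i) = dPhi ε i x := by
  rw [(hasFDerivAt_Phi hε i x).fderiv]
  have h1 : (EuclideanSpace.proj i : E3 →L[ℝ] ℝ) (e3 i) = 1 := by
    simp [e3, EuclideanSpace.single_apply]
  have h2 : (innerSL ℝ x) (e3 i) = x i := by
    simp [e3, EuclideanSpace.inner_single_right]
  simp only [ContinuousLinearMap.add_apply, ContinuousLinearMap.smul_apply, h1, h2,
    smul_eq_mul]
  rw [dPhi]
  have hq := (qe_pos hε x).ne'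
  field_simp
  ring

lemma Phi_bdd (hε : 0 < ε) (i : Fin 3) (x : E3) : |Phi ε i x| ≤ 1 / (2 * Real.sqrt ε) := by
  have hq := qe_pos hε x
  have hs : 0 < Real.sqrt ε := Real.sqrt_pos.mpr hε
  have h1 : |Phi ε i x| = |x i| / qe ε x := by
    rw [Phi, abs_div, abs_of_pos hq]
  rw [h1, div_le_div_iff₀ hq (by positivity)]
  have h2 : |x i| ≤ ‖x‖ := coord_abs_le x i
  have h3 : Real.sqrt ε ^ 2 = ε := Real.sq_sqrt hε.le
  have h4 : 0 ≤ ‖x‖ := norm_nonneg x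
  have : qe ε x = ‖x‖ ^ 2 + ε := rfl
  nlinarith [sq_nonneg (‖x‖ - Real.sqrt ε)]

lemma dPhi_bdd (hε : 0 < ε) (i : Fin 3) (x : E3) : |dPhi ε i x| ≤ 3 / ε := by
  have hq := qe_pos hε x
  have h2 : x i ^ 2 ≤ ‖x‖ ^ 2 := by
    have h := coord_abs_le x i
    calc x i ^ 2 = |x i| ^ 2 := (sq_abs _).symm
      _ ≤ ‖x‖ ^ 2 := by nlinarith [abs_nonneg (x i), norm_nonneg x]
  have h3 : ‖x‖ ^ 2 ≤ qe ε x := norm_sq_le_qe hε x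
  have h4 : |qe ε x - 2 * x i ^ 2| ≤ 3 * qe ε x := by
    rw [abs_le]; constructor <;> nlinarith [sq_nonneg (x i)]
  have h5 : |dPhi ε i x| = |qe ε x - 2 * x i ^ 2| / qe ε x ^ 2 := by
    rw [dPhi, abs_div, abs_of_pos (pow_pos hq 2)]
  rw [h5, div_le_div_iff₀ (by positivity) hε]
  have hεq : ε ≤ qe ε x := by unfold qe; nlinarith [sq_nonneg ‖x‖]
  calc |qe ε x - 2 * x i ^ 2| * ε ≤ (3 * qe ε x) * qe ε x :=
        mul_le_mul h4 hεq hε.le (by positivity)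
    _ = 3 * qe ε x ^ 2 := by ring

lemma continuous_dPhi (hε : 0 < ε) (i : Fin 3) : Continuous (dPhi ε i) := by
  unfold dPhi
  exact (continuous_qe.sub (continuous_const.mul ((EuclideanSpace.proj i :
    E3 →L[ℝ] ℝ).continuous.pow 2))).div (continuous_qe.pow 2)
    fun x => (pow_pos (qe_pos hε x) 2).ne'

lemma fderiv_sq {h : E3 → ℝ} (hh : ContDiff ℝ 2 h) (x : E3) (i : Fin 3) :
    fderiv ℝ (fun y => h y ^ 2) x (e3 i) = 2 * h x * dd i h x := by
  have hdx := (hh.differentiable (by norm_num) x).hasFDerivAt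
  have H : HasFDerivAt (fun y => h y ^ 2)
      (h x • fderiv ℝ h x + h x • fderiv ℝ h x) x := by
    have h1 := hdx.mul hdx
    have h2 : (fun y => h y ^ 2) = fun y => h y * h y := by funext y; rw [sq]
    rw [h2]; exact h1
  rw [H.fderiv]
  simp only [ContinuousLinearMap.add_apply, ContinuousLinearMap.smul_apply, smul_eq_mul, dd]
  ring

lemma differentiable_sq {h : E3 → ℝ} (hh : ContDiff ℝ 2 h) :
    Differentiable ℝ (fun y => h y ^ 2) := by
  have := hh.differentiable (n := 2) (by norm_num)
  fun_prop

/-! ### Regularized Hardy inequality -/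

lemma hardy {h : E3 → ℝ} (hε : 0 < ε) (hh : ContDiff ℝ 2 h) (h2 : MemLp h 2 volume)
    (hd : ∀ i, MemLp (dd i h) 2 volume) :
    ∫ x, h x ^ 2 / qe ε x ≤
      2 * (Real.sqrt (∫ x, h x ^ 2 / qe ε x) * Real.sqrt (∫ x, ‖gradient h x‖ ^ 2)) := by
  have hcont : Continuous h := hh.continuous
  have ih2 : Integrable (fun x => h x ^ 2) volume := h2.integrable_sq
  -- integrability of h² / q
  have iA : Integrable (fun x => h x ^ 2 / qe ε x) volume := by
    refine (ih2.bdd_mul (f := fun x => (qe ε x)⁻¹)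
      (c := ε⁻¹) (continuous_qe.inv₀ fun x => (qe_pos hε x).ne').aestronglyMeasurable
      (.of_forall fun x => ?_)).congr (.of_forall fun x => by simp [div_eq_mul_inv, mul_comm])
    rw [Real.norm_eq_abs, abs_of_pos (inv_pos.mpr (qe_pos hε x))]
    exact inv_anti₀ hε (by unfold qe; nlinarith [sq_nonneg ‖x‖])
  -- integrability of h² · dPhi i
  have iC : ∀ i : Fin 3, Integrable (fun x => h x ^ 2 * dPhi ε i x) volume := by
    intro i
    refine (ih2.bdd_mul (f := dPhi ε i) (continuous_dPhi hε i).aestronglyMeasurable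
      (c := 3 / ε) (.of_forall fun x => by rw [Real.norm_eq_abs]; exact dPhi_bdd hε i x)).congr
      (.of_forall fun x => by simp [mul_comm])
  -- pointwise inequality h²/q ≤ ∑ h² dPhi
  have hpt : ∀ x, h x ^ 2 / qe ε x ≤ ∑ i, h x ^ 2 * dPhi ε i x := by
    intro x
    have hq := qe_pos hε x
    have hsum : ∑ i, dPhi ε i x = (3 * qe ε x - 2 * ‖x‖ ^ 2) / qe ε x ^ 2 := by
      unfold dPhi
      rw [← Finset.sum_div]
      congr 1
      rw [Finset.sum_sub_distrib]
      simp [Finset.sum_const, norm_sq_eq, Finset.mul_sum]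
    have key : 1 / qe ε x ≤ (3 * qe ε x - 2 * ‖x‖ ^ 2) / qe ε x ^ 2 := by
      rw [div_le_div_iff₀ hq (by positivity)]
      have : ‖x‖ ^ 2 ≤ qe ε x := norm_sq_le_qe hε x
      nlinarith
    calc h x ^ 2 / qe ε x = h x ^ 2 * (1 / qe ε x) := by ring
      _ ≤ h x ^ 2 * ((3 * qe ε x - 2 * ‖x‖ ^ 2) / qe ε x ^ 2) :=
          mul_le_mul_of_nonneg_left key (sq_nonneg _)
      _ = ∑ i, h x ^ 2 * dPhi ε i x := by rw [← Finset.mul_sum, hsum]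
  -- step 1 : ∫ h²/q ≤ ∑ ∫ h² dPhi
  have step1 : ∫ x, h x ^ 2 / qe ε x ≤ ∑ i, ∫ x, h x ^ 2 * dPhi ε i x := by
    rw [← integral_finset_sum _ fun i _ => iC i]
    exact integral_mono iA (integrable_finset_sum _ fun i _ => iC i) hpt
  -- step 2 : IBP for each i
  have ibp : ∀ i : Fin 3, ∫ x, h x ^ 2 * dPhi ε i x
      = -∫ x, 2 * h x * dd i h x * Phi ε i x := by
    intro i
    have i1 : Integrable (fun x => 2 * h x * dd i h x * Phi ε i x) volume := by
      have base : Integrable (fun x => 2 * (h x * dd i h x)) volume :=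
        (integrable_mul_L2 h2 (hd i)).const_mul 2
      refine (base.bdd_mul (f := Phi ε i)
        ((differentiable_Phi hε i).continuous).aestronglyMeasurable
        (c := 1 / (2 * Real.sqrt ε)) (.of_forall fun x => by
          rw [Real.norm_eq_abs]; exact Phi_bdd hε i x)).congr
        (.of_forall fun x => by ring)
    have i3 : Integrable (fun x => h x ^ 2 * Phi ε i x) volume := by
      refine (ih2.bdd_mul (f := Phi ε i)
        ((differentiable_Phi hε i).continuous).aestronglyMeasurable
        (c := 1 / (2 * Real.sqrt ε)) (.of_forall fun x => by
          rw [Real.norm_eq_abs]; exact Phi_bdd hε i x)).congr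
        (.of_forall fun x => by beta_reduce; rw [mul_comm])
    have key := integral_mul_fderiv_eq_neg_fderiv_mul_of_integrable (μ := volume)
      (f := fun x => h x ^ 2) (g := Phi ε i) (v := e3 i)
      (by
        refine i1.congr (.of_forall fun x => ?_)
        beta_reduce; rw [fderiv_sq hh x i])
      (by
        refine (iC i).congr (.of_forall fun x => ?_)
        beta_reduce; rw [fderiv_Phi hε i x])
      i3
      (fun x _ => differentiable_sq hh x)
      (fun x _ => differentiable_Phi hε i x)
    have l : (∫ x, h x ^ 2 * dPhi ε i x) = ∫ x, h x ^ 2 * fderiv ℝ (Phi ε i) x (e3 i) := by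
      apply integral_congr_ae (.of_forall fun x => by beta_reduce; rw [fderiv_Phi hε i x])
    rw [l, key]
    congr 1
    exact integral_congr_ae (.of_forall fun x => by beta_reduce; rw [fderiv_sq hh x i])
  -- membership facts for the gradient
  have hgradE : MemLp (fun x => gradient h x) 2 volume := by
    have hmem : ∀ i : Fin 3, MemLp (fun x => dd i h x • e3 i) 2 volume := by
      intro i
      refine MemLp.of_le_mul (c := ‖e3 i‖) (hd i)
        (((contDiff_dd hh i).continuous.smul continuous_const).aestronglyMeasurable)
        (.of_forall fun x => ?_)
      rw [norm_smul, mul_comm]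
    have heq : (fun x => ∑ i, dd i h x • e3 i) = fun x => gradient h x := by
      funext x; exact (grad_eq_sum x).symm
    rw [← heq]
    exact memLp_finset_sum (μ := volume) (p := 2) Finset.univ fun i _ => hmem i
  have hgradn : MemLp (fun x => ‖gradient h x‖) 2 volume := hgradE.norm
  have hsqrtq_pos : ∀ x : E3, 0 < Real.sqrt (qe ε x) :=
    fun x => Real.sqrt_pos.mpr (qe_pos hε x)
  have hu : MemLp (fun x => |h x| / Real.sqrt (qe ε x)) 2 volume := by
    refine MemLp.of_le_mul (c := 1 / Real.sqrt ε) h2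
      ((hcont.abs.div (continuous_qe.sqrt) fun x => (hsqrtq_pos x).ne').aestronglyMeasurable)
      (.of_forall fun x => ?_)
    rw [Real.norm_eq_abs, Real.norm_eq_abs, abs_div, abs_abs,
      abs_of_pos (hsqrtq_pos x)]
    have hse : Real.sqrt ε ≤ Real.sqrt (qe ε x) := by
      apply Real.sqrt_le_sqrt
      unfold qe; nlinarith [sq_nonneg ‖x‖]
    calc |h x| / Real.sqrt (qe ε x) ≤ |h x| / Real.sqrt ε :=
          div_le_div_of_nonneg_left (abs_nonneg _) (Real.sqrt_pos.mpr hε) hse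
      _ = 1 / Real.sqrt ε * |h x| := by ring
  -- the combined first-order term
  have i1all : ∀ i : Fin 3, Integrable (fun x => 2 * h x * dd i h x * Phi ε i x) volume := by
    intro i
    have base : Integrable (fun x => 2 * (h x * dd i h x)) volume :=
      (integrable_mul_L2 h2 (hd i)).const_mul 2
    refine (base.bdd_mul (f := Phi ε i)
      ((differentiable_Phi hε i).continuous).aestronglyMeasurable
      (c := 1 / (2 * Real.sqrt ε)) (.of_forall fun x => by
        rw [Real.norm_eq_abs]; exact Phi_bdd hε i x)).congr
      (.of_forall fun x => by ring)
  have hptsum : ∀ x : E3, (∑ i, 2 * h x * dd i h x * Phi ε i x)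
      = 2 * h x * (inner (𝕜 := ℝ) (gradient h x) x) / qe ε x := by
    intro x
    rw [inner_eval]
    simp only [Phi, grad_apply]
    rw [Finset.mul_sum, Finset.sum_div]
    exact Finset.sum_congr rfl fun i _ => by ring
  have step3 : (∑ i, ∫ x, h x ^ 2 * dPhi ε i x)
      = ∫ x, -(2 * h x * (inner (𝕜 := ℝ) (gradient h x) x) / qe ε x) := by
    calc (∑ i, ∫ x, h x ^ 2 * dPhi ε i x)
        = ∑ i, -∫ x, 2 * h x * dd i h x * Phi ε i x := Finset.sum_congr rfl fun i _ => ibp i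
      _ = -∑ i, ∫ x, 2 * h x * dd i h x * Phi ε i x := by rw [Finset.sum_neg_distrib]
      _ = -∫ x, ∑ i, 2 * h x * dd i h x * Phi ε i x := by
          rw [integral_finset_sum _ fun i _ => i1all i]
      _ = ∫ x, -(2 * h x * (inner (𝕜 := ℝ) (gradient h x) x) / qe ε x) := by
          rw [← integral_neg]
          refine integral_congr_ae (.of_forall fun x => ?_)
          show -(∑ i, 2 * h x * dd i h x * Phi ε i x)
              = -(2 * h x * (inner (𝕜 := ℝ) (gradient h x) x) / qe ε x)
          rw [hptsum x]
  have iF : Integrable (fun x => -(2 * h x * (inner (𝕜 := ℝ) (gradient h x) x) / qe ε x))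
      volume := by
    refine ((integrable_finset_sum Finset.univ fun i _ => i1all i).neg).congr
      (.of_forall fun x => ?_)
    show -(∑ i, 2 * h x * dd i h x * Phi ε i x)
        = -(2 * h x * (inner (𝕜 := ℝ) (gradient h x) x) / qe ε x)
    rw [hptsum x]
  have iR : Integrable (fun x => 2 * (|h x| / Real.sqrt (qe ε x) * ‖gradient h x‖))
      volume := (integrable_mul_L2 hu hgradn).const_mul 2
  have step4 : ∀ x : E3, -(2 * h x * (inner (𝕜 := ℝ) (gradient h x) x) / qe ε x)
      ≤ 2 * (|h x| / Real.sqrt (qe ε x) * ‖gradient h x‖) := by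
    intro x
    have hq := qe_pos hε x
    have hs := hsqrtq_pos x
    have hxq : ‖x‖ ≤ Real.sqrt (qe ε x) := by
      rw [show ‖x‖ = Real.sqrt (‖x‖ ^ 2) from (Real.sqrt_sq (norm_nonneg x)).symm]
      exact Real.sqrt_le_sqrt (norm_sq_le_qe hε x)
    have hI : |inner (𝕜 := ℝ) (gradient h x) x| ≤ ‖gradient h x‖ * ‖x‖ :=
      abs_real_inner_le_norm _ _
    have hq_eq : qe ε x = Real.sqrt (qe ε x) * Real.sqrt (qe ε x) :=
      (Real.mul_self_sqrt hq.le).symm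
    have h1 : -(2 * h x * (inner (𝕜 := ℝ) (gradient h x) x))
        ≤ 2 * |h x| * (‖gradient h x‖ * Real.sqrt (qe ε x)) := by
      have b1 : -(2 * h x * (inner (𝕜 := ℝ) (gradient h x) x))
          ≤ 2 * |h x| * |inner (𝕜 := ℝ) (gradient h x) x| := by
        rw [neg_le]
        calc -(2 * |h x| * |inner (𝕜 := ℝ) (gradient h x) x|)
            = -(|2 * h x * (inner (𝕜 := ℝ) (gradient h x) x)|) := by
              rw [abs_mul, abs_mul, abs_two]
          _ ≤ 2 * h x * (inner (𝕜 := ℝ) (gradient h x) x) := neg_abs_le _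
      refine b1.trans ?_
      have b2 : |inner (𝕜 := ℝ) (gradient h x) x| ≤ ‖gradient h x‖ * Real.sqrt (qe ε x) :=
        hI.trans (mul_le_mul_of_nonneg_left hxq (norm_nonneg _))
      exact mul_le_mul_of_nonneg_left b2 (by positivity)
    calc -(2 * h x * (inner (𝕜 := ℝ) (gradient h x) x) / qe ε x)
        = -(2 * h x * (inner (𝕜 := ℝ) (gradient h x) x)) / qe ε x := by ring
      _ ≤ 2 * |h x| * (‖gradient h x‖ * Real.sqrt (qe ε x)) / qe ε x := by
          gcongr
      _ = 2 * (|h x| / Real.sqrt (qe ε x) * ‖gradient h x‖) := by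
          field_simp
          rw [Real.sq_sqrt hq.le]
  have step5 : ∫ x, -(2 * h x * (inner (𝕜 := ℝ) (gradient h x) x) / qe ε x)
      ≤ 2 * (Real.sqrt (∫ x, h x ^ 2 / qe ε x) * Real.sqrt (∫ x, ‖gradient h x‖ ^ 2)) := by
    calc ∫ x, -(2 * h x * (inner (𝕜 := ℝ) (gradient h x) x) / qe ε x)
        ≤ ∫ x, 2 * (|h x| / Real.sqrt (qe ε x) * ‖gradient h x‖) :=
          integral_mono iF iR step4
      _ = 2 * ∫ x, |h x| / Real.sqrt (qe ε x) * ‖gradient h x‖ := integral_const_mul 2 _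
      _ ≤ 2 * (Real.sqrt (∫ x, (|h x| / Real.sqrt (qe ε x)) ^ 2)
            * Real.sqrt (∫ x, ‖gradient h x‖ ^ 2)) := by
          have := cs hu hgradn
          linarith
      _ = 2 * (Real.sqrt (∫ x, h x ^ 2 / qe ε x) * Real.sqrt (∫ x, ‖gradient h x‖ ^ 2)) := by
          have heq2 : (∫ x, (|h x| / Real.sqrt (qe ε x)) ^ 2) = ∫ x, h x ^ 2 / qe ε x :=
            integral_congr_ae (.of_forall fun x => by
              beta_reduce
              rw [div_pow, sq_abs, Real.sq_sqrt (qe_pos hε x).le])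
          rw [heq2]
  calc ∫ x, h x ^ 2 / qe ε x ≤ ∑ i, ∫ x, h x ^ 2 * dPhi ε i x := step1
    _ = ∫ x, -(2 * h x * (inner (𝕜 := ℝ) (gradient h x) x) / qe ε x) := step3
    _ ≤ 2 * (Real.sqrt (∫ x, h x ^ 2 / qe ε x) * Real.sqrt (∫ x, ‖gradient h x‖ ^ 2)) := step5

/-- **Weighted gradient estimate:** `‖∇h‖_{L²} ≤ C ‖ |x| Δh ‖_{L²}` for `h ∈ H²(ℝ³)`
with `|x| Δh ∈ L²`. -/
theorem gradient_estimate :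
    ∃ C : ℝ, 0 < C ∧ ∀ h : E3 → ℝ,
      ContDiff ℝ 2 h →
      MemLp h 2 volume →
      (∀ i, MemLp (dd i h) 2 volume) →
      (∀ i j, MemLp (dd i (dd j h)) 2 volume) →
      MemLp (fun x => ‖x‖ * lap h x) 2 volume →
      Real.sqrt (∫ x, ‖gradient h x‖ ^ 2)
        ≤ C * Real.sqrt (∫ x, (‖x‖ * lap h x) ^ 2) := by
  refine ⟨2, by norm_num, fun h hh h2 hd hdd hxl => ?_⟩
  have hcont : Continuous h := hh.continuous
  set G := Real.sqrt (∫ x, ‖gradient h x‖ ^ 2) with hG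
  set R := ∫ x, (‖x‖ * lap h x) ^ 2 with hR
  have hGnn : 0 ≤ G := Real.sqrt_nonneg _
  have hRnn : 0 ≤ R := integral_nonneg fun x => sq_nonneg _
  -- MemLp of the Laplacian
  have hlap : MemLp (lap h) 2 volume := by
    have : lap h = fun x => ∑ i, dd i (dd i h) x := rfl
    rw [this]
    exact memLp_finset_sum Finset.univ fun i _ => hdd i i
  have hclap : Continuous (lap h) := by
    have : ∀ i j : Fin 3, Continuous (dd i (dd j h)) := by
      intro i j
      have h1 : ContDiff ℝ 0 (fderiv ℝ (dd j h)) := (contDiff_dd hh j).fderiv_right le_rfl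
      exact (h1.clm_apply contDiff_const).continuous
    exact continuous_finset_sum _ fun i _ => this i i
  -- integrability facts
  have isq : ∀ i : Fin 3, Integrable (fun x => dd i h x ^ 2) volume := fun i =>
    (hd i).integrable_sq
  have ilapsq : Integrable (fun x => lap h x ^ 2) volume := hlap.integrable_sq
  have ixlsq : Integrable (fun x => (‖x‖ * lap h x) ^ 2) volume := hxl.integrable_sq
  have ihlap : ∀ i : Fin 3, Integrable (fun x => h x * dd i (dd i h) x) volume := fun i =>
    integrable_mul_L2 h2 (hdd i i)
  -- the energy identity: ∫ ‖∇h‖² = -∫ h Δh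
  have energy : ∫ x, ‖gradient h x‖ ^ 2 = -∫ x, h x * lap h x := by
    calc ∫ x, ‖gradient h x‖ ^ 2 = ∫ x, ∑ i, dd i h x ^ 2 :=
          integral_congr_ae (.of_forall fun x => norm_grad_sq x)
      _ = ∑ i, ∫ x, dd i h x ^ 2 := integral_finset_sum _ fun i _ => isq i
      _ = ∑ i, -∫ x, h x * dd i (dd i h) x :=
          Finset.sum_congr rfl fun i _ => ibp1 hh h2 hd hdd i
      _ = -∑ i, ∫ x, h x * dd i (dd i h) x := by rw [Finset.sum_neg_distrib]
      _ = -∫ x, ∑ i, h x * dd i (dd i h) x := by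
          rw [integral_finset_sum _ fun i _ => ihlap i]
      _ = -∫ x, h x * lap h x := by
          congr 1
          refine integral_congr_ae (.of_forall fun x => ?_)
          show ∑ i, h x * dd i (dd i h) x = h x * lap h x
          rw [lap, Finset.mul_sum]
  -- the ε-regularized estimate
  have keyε : ∀ ε : ℝ, 0 < ε → G ^ 2 ≤ 4 * R + 4 * ε * ∫ x, lap h x ^ 2 := by
    intro ε hε
    set u : E3 → ℝ := fun x => h x / Real.sqrt (qe ε x) with hu_def
    set v : E3 → ℝ := fun x => Real.sqrt (qe ε x) * lap h x with hv_def
    have hsq_pos : ∀ x : E3, 0 < Real.sqrt (qe ε x) :=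
      fun x => Real.sqrt_pos.mpr (qe_pos hε x)
    have hu : MemLp u 2 volume := by
      refine MemLp.of_le_mul (c := 1 / Real.sqrt ε) h2
        ((hcont.div (continuous_qe.sqrt) fun x => (hsq_pos x).ne').aestronglyMeasurable)
        (.of_forall fun x => ?_)
      rw [Real.norm_eq_abs, Real.norm_eq_abs]
      show |h x / Real.sqrt (qe ε x)| ≤ 1 / Real.sqrt ε * |h x|
      rw [abs_div, abs_of_pos (hsq_pos x)]
      have hse : Real.sqrt ε ≤ Real.sqrt (qe ε x) := by
        apply Real.sqrt_le_sqrt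
        unfold qe; nlinarith [sq_nonneg ‖x‖]
      calc |h x| / Real.sqrt (qe ε x) ≤ |h x| / Real.sqrt ε :=
            div_le_div_of_nonneg_left (abs_nonneg _) (Real.sqrt_pos.mpr hε) hse
        _ = 1 / Real.sqrt ε * |h x| := by ring
    have hv : MemLp v 2 volume := by
      refine MemLp.of_le (g := fun x => |‖x‖ * lap h x| + Real.sqrt ε * |lap h x|)
        ((hxl.norm).add ((hlap.norm).const_mul (Real.sqrt ε)))
        (((continuous_qe.sqrt).mul hclap).aestronglyMeasurable)
        (.of_forall fun x => ?_)
      have hb : Real.sqrt (qe ε x) ≤ ‖x‖ + Real.sqrt ε := by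
        have h1 : qe ε x ≤ (‖x‖ + Real.sqrt ε) ^ 2 := by
          have := Real.sq_sqrt hε.le
          unfold qe
          nlinarith [norm_nonneg x, Real.sqrt_nonneg ε]
        calc Real.sqrt (qe ε x) ≤ Real.sqrt ((‖x‖ + Real.sqrt ε) ^ 2) :=
              Real.sqrt_le_sqrt h1
          _ = ‖x‖ + Real.sqrt ε := Real.sqrt_sq (by positivity)
      have hrhs : 0 ≤ |‖x‖ * lap h x| + Real.sqrt ε * |lap h x| := by positivity
      rw [Real.norm_eq_abs, Real.norm_eq_abs, abs_of_nonneg hrhs]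
      show |Real.sqrt (qe ε x) * lap h x| ≤ |‖x‖ * lap h x| + Real.sqrt ε * |lap h x|
      rw [abs_mul, abs_mul, abs_of_pos (hsq_pos x), abs_of_nonneg (norm_nonneg x)]
      calc Real.sqrt (qe ε x) * |lap h x| ≤ (‖x‖ + Real.sqrt ε) * |lap h x| :=
            mul_le_mul_of_nonneg_right hb (abs_nonneg _)
        _ = ‖x‖ * |lap h x| + Real.sqrt ε * |lap h x| := by ring
    -- ∫ v² = R + ε ∫ (Δh)²
    have hv2 : ∫ x, v x ^ 2 = R + ε * ∫ x, lap h x ^ 2 := by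
      have hpt : ∀ x : E3, v x ^ 2 = (‖x‖ * lap h x) ^ 2 + ε * lap h x ^ 2 := by
        intro x
        show (Real.sqrt (qe ε x) * lap h x) ^ 2 = _
        rw [mul_pow, Real.sq_sqrt (qe_pos hε x).le]
        unfold qe; ring
      calc ∫ x, v x ^ 2 = ∫ x, ((‖x‖ * lap h x) ^ 2 + ε * lap h x ^ 2) :=
            integral_congr_ae (.of_forall hpt)
        _ = (∫ x, (‖x‖ * lap h x) ^ 2) + ∫ x, ε * lap h x ^ 2 :=
            integral_add ixlsq (ilapsq.const_mul ε)
        _ = R + ε * ∫ x, lap h x ^ 2 := by rw [integral_const_mul]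
    have hv2nn : 0 ≤ ∫ x, v x ^ 2 := integral_nonneg fun x => sq_nonneg _
    set B := Real.sqrt (∫ x, v x ^ 2) with hB
    have hBnn : 0 ≤ B := Real.sqrt_nonneg _
    -- ∫ u² = ∫ h²/q
    have hu2 : ∫ x, u x ^ 2 = ∫ x, h x ^ 2 / qe ε x := by
      refine integral_congr_ae (.of_forall fun x => ?_)
      show (h x / Real.sqrt (qe ε x)) ^ 2 = h x ^ 2 / qe ε x
      rw [div_pow, Real.sq_sqrt (qe_pos hε x).le]
    set A := Real.sqrt (∫ x, h x ^ 2 / qe ε x) with hA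
    have hAnn : 0 ≤ A := Real.sqrt_nonneg _
    have hu2nn : 0 ≤ ∫ x, h x ^ 2 / qe ε x :=
      integral_nonneg fun x => div_nonneg (sq_nonneg _) (qe_pos hε x).le
    -- Hardy: A ≤ 2 G
    have hardy1 : A ≤ 2 * G := by
      have := hardy hε hh h2 hd
      have hA2 : A ^ 2 ≤ 2 * (A * G) := by
        rw [hA, Real.sq_sqrt hu2nn]; exact this
      nlinarith [sq_nonneg (A - 2 * G)]
    -- main estimate: G² ≤ A · B
    have main : G ^ 2 ≤ A * B := by
      have h1 : G ^ 2 = ∫ x, ‖gradient h x‖ ^ 2 := by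
        rw [hG, Real.sq_sqrt (integral_nonneg fun x => sq_nonneg _)]
      have h2' : (∫ x, ‖gradient h x‖ ^ 2) = ∫ x, u x * (-v x) := by
        rw [energy, ← integral_neg]
        refine integral_congr_ae (.of_forall fun x => ?_)
        show -(h x * lap h x) = u x * (-v x)
        rw [hu_def, hv_def]
        show -(h x * lap h x)
            = h x / Real.sqrt (qe ε x) * (-(Real.sqrt (qe ε x) * lap h x))
        rw [div_mul_eq_mul_div, eq_div_iff (hsq_pos x).ne']
        ring
      have h3 : ∫ x, u x * (-v x) ≤ A * B := by
        have hcs := cs hu hv.neg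
        have e1 : (∫ x, (-v x) ^ 2) = ∫ x, v x ^ 2 :=
          integral_congr_ae (.of_forall fun x => by beta_reduce; rw [neg_pow]; ring)
        rw [hu2] at hcs
        calc ∫ x, u x * (-v x) ≤ A * Real.sqrt (∫ x, (-v x) ^ 2) := by
              rw [hA]; exact hcs
          _ = A * B := by rw [e1]
      rw [h1, h2']; exact h3
    -- conclude
    have hGB : G ^ 2 ≤ 2 * G * B := by
      calc G ^ 2 ≤ A * B := main
        _ ≤ 2 * G * B := mul_le_mul_of_nonneg_right hardy1 hBnn
    have hB2 : B ^ 2 = R + ε * ∫ x, lap h x ^ 2 := by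
      rw [hB, Real.sq_sqrt hv2nn, hv2]
    have hG4B : G ^ 2 ≤ 4 * B ^ 2 := by nlinarith [sq_nonneg (G - 2 * B)]
    rw [hB2] at hG4B
    linarith
  -- take ε → 0
  have hD : 0 ≤ ∫ x, lap h x ^ 2 := integral_nonneg fun x => sq_nonneg _
  have hG2R : G ^ 2 ≤ 4 * R := by
    by_contra hcon
    push_neg at hcon
    set δ := G ^ 2 - 4 * R with hδ
    have hδpos : 0 < δ := by linarith
    set ε := δ / (4 * (∫ x, lap h x ^ 2) + 1) with hεdef
    have hεpos : 0 < ε := by positivity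
    have := keyε ε hεpos
    have hle : 4 * ε * ∫ x, lap h x ^ 2 < δ := by
      have h0 : (0:ℝ) < 4 * (∫ x, lap h x ^ 2) + 1 := by positivity
      have he : 4 * ε * ∫ x, lap h x ^ 2
          = 4 * δ * (∫ x, lap h x ^ 2) / (4 * (∫ x, lap h x ^ 2) + 1) := by
        rw [hεdef]; ring
      rw [he, div_lt_iff₀ h0]
      nlinarith
    linarith
  -- finish: G ≤ 2 √R
  calc G = Real.sqrt (G ^ 2) := (Real.sqrt_sq hGnn).symm
    _ ≤ Real.sqrt (4 * R) := Real.sqrt_le_sqrt hG2R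
    _ = 2 * Real.sqrt R := by
        rw [show (4 : ℝ) * R = 2 ^ 2 * R by norm_num, Real.sqrt_mul (by positivity),
          Real.sqrt_sq (by norm_num)]

end
end
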